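/- Let H be a connected k-uniform hypergraph with m ≥ 1 edges and signless Laplacian eigenpair (ρ, x). Then x_max ≥ √( ρ/(k²m) ), and equality holds if and only if H is regular. -/

import Mathlib

open Finset Matrix

variable {V : Type*} [Fintype V] [DecidableEq V]

/-- The incidence matrix of a hypergraph with vertex type `V` and edge set `E`:
`B(v,e) = 1` if `v ∈ e` and `0` otherwise. -/
def inc (E : Finset (Finset V)) : Matrix V ↥E ℝ :=
  fun v e => if v ∈ (e : Finset V) then 1 else 0

/-- The signless Laplacian matrix `Q = B * Bᵀ`. -/
def signlessLap (E : Finset (Finset V)) : Matrix V V ℝ :=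
  inc E * (inc E)ᵀ

/-- The degree of a vertex: the number of edges containing it. -/
def deg (E : Finset (Finset V)) (v : V) : ℕ :=
  (E.filter fun e => v ∈ e).card

/-- A hypergraph is connected if the reflexive-transitive closure of the relation
"`u ≠ v` and some edge contains both `u` and `v`" relates every pair of vertices. -/
def HConnected (E : Finset (Finset V)) : Prop :=
  ∀ u v : V, Relation.ReflTransGen (fun a b => a ≠ b ∧ ∃ e ∈ E, a ∈ e ∧ b ∈ e) u v

/-- A hypergraph is regular if all vertices have the same degree. -/
def HRegular (E : Finset (Finset V)) : Prop :=
  ∃ r, ∀ v : V, deg E v = r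

/-- A signless Laplacian eigenpair `(ρ, x)`: `x` is entrywise positive,
normalized by `∑ v, x v ^ 2 = 1`, and `Q x = ρ x`. -/
def Eigenpair (E : Finset (Finset V)) (ρ : ℝ) (x : V → ℝ) : Prop :=
  (∀ v, 0 < x v) ∧ (∑ v, x v ^ 2 = 1) ∧ (signlessLap E).mulVec x = ρ • x

set_option linter.unusedSectionVars false

lemma signlessLap_mulVec (E : Finset (Finset V)) (x : V → ℝ) (v : V) :
    (signlessLap E).mulVec x v =
      ∑ e ∈ E.filter (fun e => v ∈ e), ∑ w ∈ e, x w := by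
  classical
  unfold signlessLap
  simp only [Matrix.mulVec, Matrix.mul_apply, dotProduct, Matrix.transpose_apply,
    Finset.sum_mul, inc]
  rw [Finset.sum_comm]
  have : ∀ y : E, (∑ w : V, ((if v ∈ (y:Finset V) then (1:ℝ) else 0) * if w ∈ (y:Finset V) then 1 else 0) * x w)
      = if v ∈ (y:Finset V) then ∑ w ∈ (y:Finset V), x w else 0 := by
    intro y
    by_cases hv : v ∈ (y:Finset V) <;> simp [hv, boole_mul, Finset.sum_ite_mem]
  rw [Finset.sum_congr rfl fun y _ => this y,
    Finset.sum_coe_sort E (fun e => if v ∈ e then ∑ w ∈ e, x w else 0),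
    Finset.sum_filter]

lemma rho_eq (E : Finset (Finset V)) (ρ : ℝ) (x : V → ℝ)
    (h2 : ∑ v, x v ^ 2 = 1) (h3 : (signlessLap E).mulVec x = ρ • x) :
    ρ = ∑ e ∈ E, (∑ w ∈ e, x w) ^ 2 := by
  classical
  have key : ∀ v, (∑ e ∈ E.filter (fun e => v ∈ e), ∑ w ∈ e, x w) = ρ * x v := by
    intro v
    rw [← signlessLap_mulVec, h3]; rfl
  have h0 : ρ = ∑ v, (ρ * x v) * x v := by
    simp_rw [mul_assoc, ← sq]
    rw [← Finset.mul_sum, h2, mul_one]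
  rw [h0]
  rw [show (∑ v, (ρ * x v) * x v) = ∑ v, (∑ e ∈ E.filter (fun e => v ∈ e), ∑ w ∈ e, x w) * x v
    from Finset.sum_congr rfl fun v _ => by rw [key]]
  rw [show (∑ v, (∑ e ∈ E.filter (fun e => v ∈ e), ∑ w ∈ e, x w) * x v)
      = ∑ v, ∑ e ∈ E, if v ∈ e then (∑ w ∈ e, x w) * x v else 0
    from Finset.sum_congr rfl fun v _ => by rw [Finset.sum_mul, Finset.sum_filter]]
  rw [Finset.sum_comm]
  refine Finset.sum_congr rfl fun e _ => ?_
  have : ∀ v : V, (if v ∈ e then (∑ w ∈ e, x w) * x v else 0)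
      = (∑ w ∈ e, x w) * (if v ∈ e then x v else 0) := by
    intro v; by_cases hv : v ∈ e <;> simp [hv]
  simp_rw [this, ← Finset.mul_sum, Finset.sum_ite_mem, Finset.univ_inter, sq]

lemma mem_some_edge (E : Finset (Finset V)) (hconn : HConnected E) (hE : E.Nonempty)
    (hcard : ∀ e ∈ E, 2 ≤ e.card) (v : V) : ∃ e ∈ E, v ∈ e := by
  obtain ⟨e₀, he₀⟩ := hE
  obtain ⟨v₀, hv₀⟩ := Finset.card_pos.mp (lt_of_lt_of_le two_pos (hcard e₀ he₀))
  rcases (hconn v v₀).cases_head with h | ⟨b, ⟨_, e, heE, hve, _⟩, _⟩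
  · exact ⟨e₀, he₀, h ▸ hv₀⟩
  · exact ⟨e, heE, hve⟩

/-- For a connected `k`-graph with `m ≥ 1` edges and signless Laplacian eigenpair
`(ρ, x)`: `x_max ≥ √(ρ/(k²m))`, with equality iff `H` is regular. -/
theorem xmax_ge_sqrt_rho_div_k2m {V : Type*} [Fintype V] [DecidableEq V] (k : ℕ)
    (hk : 2 ≤ k) (E : Finset (Finset V)) (hunif : ∀ e ∈ E, e.card = k)
    (hconn : HConnected E) (hE : E.Nonempty)
    (ρ : ℝ) (x : V → ℝ) (hx : Eigenpair E ρ x)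
    (xmax : ℝ) (hmax : IsGreatest (Set.range x) xmax) :
    Real.sqrt (ρ / ((k : ℝ) ^ 2 * E.card)) ≤ xmax ∧
      (xmax = Real.sqrt (ρ / ((k : ℝ) ^ 2 * E.card)) ↔ HRegular E) := by
  classical
  obtain ⟨hpos, hnorm, heig⟩ := hx
  obtain ⟨v₀, hv₀⟩ := hmax.1
  have hle : ∀ v, x v ≤ xmax := fun v => hmax.2 (Set.mem_range_self v)
  have hxmax : 0 < xmax := hv₀ ▸ hpos v₀
  have hk0 : (0:ℝ) < k := by positivity
  have hm0 : (0:ℝ) < E.card := by exact_mod_cast hE.card_pos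
  have key : ∀ v, (∑ e ∈ E.filter (fun e => v ∈ e), ∑ w ∈ e, x w) = ρ * x v := by
    intro v
    rw [← signlessLap_mulVec, heig]; rfl
  have hρ : ρ = ∑ e ∈ E, (∑ w ∈ e, x w) ^ 2 := rho_eq E ρ x hnorm heig
  -- edge sum bounds
  have se_le : ∀ e ∈ E, (∑ w ∈ e, x w) ≤ k * xmax := by
    intro e he
    calc (∑ w ∈ e, x w) ≤ ∑ w ∈ e, xmax := Finset.sum_le_sum fun w _ => hle w
    _ = k * xmax := by rw [Finset.sum_const, hunif e he, nsmul_eq_mul]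
  have se_ge : ∀ (c : ℝ), (∀ w, c ≤ x w) → ∀ e ∈ E, k * c ≤ ∑ w ∈ e, x w := by
    intro c hc e he
    calc (k : ℝ) * c = ∑ w ∈ e, c := by rw [Finset.sum_const, hunif e he, nsmul_eq_mul]
    _ ≤ ∑ w ∈ e, x w := Finset.sum_le_sum fun w _ => hc w
  have se_pos : ∀ e ∈ E, 0 < ∑ w ∈ e, x w := by
    intro e he
    refine Finset.sum_pos (fun w _ => hpos w) ?_
    rw [← Finset.card_pos, hunif e he]; omega
  -- ρ ≤ k² m xmax²
  have hρle : ρ ≤ (k:ℝ)^2 * E.card * xmax^2 := by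
    rw [hρ]
    calc (∑ e ∈ E, (∑ w ∈ e, x w) ^ 2) ≤ ∑ e ∈ E, ((k:ℝ) * xmax)^2 :=
      Finset.sum_le_sum fun e he => pow_le_pow_left₀ (se_pos e he).le (se_le e he) 2
    _ = (k:ℝ)^2 * E.card * xmax^2 := by rw [Finset.sum_const, nsmul_eq_mul]; ring
  have hq : ρ / ((k:ℝ)^2 * E.card) ≤ xmax^2 := by
    rw [div_le_iff₀ (by positivity)]
    linarith [hρle]
  have hineq : Real.sqrt (ρ / ((k : ℝ) ^ 2 * E.card)) ≤ xmax := by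
    calc Real.sqrt (ρ / ((k : ℝ) ^ 2 * E.card)) ≤ Real.sqrt (xmax^2) :=
      Real.sqrt_le_sqrt hq
    _ = xmax := Real.sqrt_sq hxmax.le
  have hρpos : 0 < ρ := by
    rw [hρ]
    exact Finset.sum_pos (fun e he => pow_pos (se_pos e he) 2) hE
  -- consequence of x being constant equal to xmax
  have const_imp : (∀ v, x v = xmax) → xmax = Real.sqrt (ρ / ((k : ℝ) ^ 2 * E.card)) := by
    intro hconst
    have : ρ = (k:ℝ)^2 * E.card * xmax^2 := by
      rw [hρ]
      rw [Finset.sum_congr rfl fun e he => show (∑ w ∈ e, x w)^2 = ((k:ℝ)*xmax)^2 by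
        rw [Finset.sum_congr rfl fun w _ => hconst w, Finset.sum_const, hunif e he,
          nsmul_eq_mul]]
      rw [Finset.sum_const, nsmul_eq_mul]; ring
    rw [this, mul_comm, mul_div_assoc, div_self (by positivity), mul_one,
      Real.sqrt_sq hxmax.le]
  refine ⟨hineq, ?_, ?_⟩
  · -- equality → regular
    intro heq
    have hx2 : xmax^2 = ρ / ((k:ℝ)^2 * E.card) := by
      rw [heq, Real.sq_sqrt (by positivity)]
    have hρeq : ρ = (k:ℝ)^2 * E.card * xmax^2 := by
      have h := hx2; field_simp at h; linarith
    have hsum_eq : (∑ e ∈ E, (∑ w ∈ e, x w) ^ 2) = ∑ e ∈ E, ((k:ℝ) * xmax)^2 := by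
      rw [← hρ, Finset.sum_const, nsmul_eq_mul, hρeq]; ring
    have se_eq : ∀ e ∈ E, (∑ w ∈ e, x w) = (k:ℝ) * xmax := by
      intro e he
      have h2 := (Finset.sum_eq_sum_iff_of_le
        (fun e he => pow_le_pow_left₀ (se_pos e he).le (se_le e he) 2)).mp hsum_eq e he
      exact (sq_eq_sq₀ (se_pos e he).le (by positivity)).mp h2
    have xconst : ∀ v, x v = xmax := by
      intro v
      obtain ⟨e, he, hve⟩ := mem_some_edge E hconn hE (fun e he => (hunif e he) ▸ hk) v
      have hsum : (∑ w ∈ e, x w) = ∑ w ∈ e, xmax := by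
        rw [se_eq e he, Finset.sum_const, hunif e he, nsmul_eq_mul]
      exact (Finset.sum_eq_sum_iff_of_le (fun w _ => hle w)).mp hsum v hve
    have hdeg : ∀ v, ((E.filter (fun e => v ∈ e)).card : ℝ) * ((k:ℝ) * xmax) = ρ * xmax := by
      intro v
      rw [← xconst v, ← key v,
        Finset.sum_congr rfl (fun e he' => se_eq e (Finset.mem_filter.mp he').1),
        Finset.sum_const, nsmul_eq_mul, xconst v]
    refine ⟨deg E v₀, fun v => ?_⟩
    have h1 := hdeg v
    have h2 := hdeg v₀
    have h3 : ((E.filter (fun e => v ∈ e)).card : ℝ)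
        = ((E.filter (fun e => v₀ ∈ e)).card : ℝ) :=
      mul_right_cancel₀ (by positivity) (h1.trans h2.symm)
    unfold deg
    exact_mod_cast h3
  · -- regular → equality
    rintro ⟨r, hr⟩
    have hcardf : ∀ v : V, (E.filter (fun e => v ∈ e)).card = r := hr
    have sum_filter_const : ∀ (v : V) (c : ℝ),
        (∑ _e ∈ E.filter (fun e => v ∈ e), c) = (r:ℝ) * c := by
      intro v c
      rw [Finset.sum_const, hcardf v, nsmul_eq_mul]
    obtain ⟨u, -, hu⟩ := Finset.exists_min_image Finset.univ x ⟨v₀, Finset.mem_univ v₀⟩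
    have humin : ∀ w, x u ≤ x w := fun w => hu w (Finset.mem_univ w)
    have hge : (r:ℝ) * ((k:ℝ) * x u) ≤ ρ * x u := by
      rw [← key u, ← sum_filter_const u]
      exact Finset.sum_le_sum fun e he => se_ge (x u) humin e (Finset.mem_filter.mp he).1
    have hle' : ρ * xmax ≤ (r:ℝ) * ((k:ℝ) * xmax) := by
      calc ρ * xmax = ∑ e ∈ E.filter (fun e => v₀ ∈ e), ∑ w ∈ e, x w := by
            rw [key v₀, hv₀]
      _ ≤ ∑ _e ∈ E.filter (fun e => v₀ ∈ e), (k:ℝ) * xmax :=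
            Finset.sum_le_sum fun e he => se_le e (Finset.mem_filter.mp he).1
      _ = (r:ℝ) * ((k:ℝ) * xmax) := sum_filter_const v₀ _
    have hρrk : ρ = (r:ℝ) * k := by
      have h1 : ρ ≤ (r:ℝ) * k := by nlinarith
      have h2 : (r:ℝ) * k ≤ ρ := by nlinarith [hpos u]
      linarith
    have step : ∀ a, x a = xmax → ∀ e ∈ E, a ∈ e → ∀ w ∈ e, x w = xmax := by
      intro a ha e he hae w hwe
      have hsum : (∑ e' ∈ E.filter (fun e' => a ∈ e'), ∑ w' ∈ e', x w')
          = ∑ _e' ∈ E.filter (fun e' => a ∈ e'), (k:ℝ) * xmax := by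
        rw [key a, ha, sum_filter_const a, hρrk]; ring
      have hse : (∑ w' ∈ e, x w') = (k:ℝ) * xmax :=
        (Finset.sum_eq_sum_iff_of_le
          (fun e' he' => se_le e' (Finset.mem_filter.mp he').1)).mp hsum e
          (Finset.mem_filter.mpr ⟨he, hae⟩)
      have hsum2 : (∑ w' ∈ e, x w') = ∑ _w' ∈ e, xmax := by
        rw [hse, Finset.sum_const, hunif e he, nsmul_eq_mul]
      exact (Finset.sum_eq_sum_iff_of_le (fun w' _ => hle w')).mp hsum2 w hwe
    have hconst : ∀ w, x w = xmax := by
      intro w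
      induction hconn v₀ w with
      | refl => exact hv₀
      | tail _ hbc ih =>
        obtain ⟨_, e, heE, hb, hc⟩ := hbc
        exact step _ ih e heE hb _ hc
    exact const_imp hconst
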